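/- Let p be a prime, q = p^e, and let k be an algebraic closure of 𝔽_p. Let V be a finite-dimensional k-vector space and let F : V → V be an additive bijection satisfying F(c·v) = c^q·F(v) for all c ∈ k and v ∈ V. Then for every integer N ≥ 1, {v ∈ V : F(v) = v} = {u + F(u) + ⋯ + F^{N−1}(u) : u ∈ V with F^N(u) = u}. -/

import Mathlib

/-- Let `V` be a finite-dimensional vector space over an algebraic closure
`k` of `𝔽_p`, and `F : V → V` an additive bijection that is `q`-semilinear:
`F (c • v) = c^q • F v`. Then for every `N ≥ 1`, the `F`-fixed vectors are exactly the norms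
`u + F u + ⋯ + F^{N-1} u` of `F^N`-fixed vectors `u`. -/
theorem stmt_2 (p e q : ℕ) (hp : p.Prime) (he : 1 ≤ e) (hq : q = p ^ e)
    (k : Type*) [Field k] [IsAlgClosed k] [CharP k p]
    (V : Type*) [AddCommGroup V] [Module k V] [FiniteDimensional k V]
    (F : V → V) (hadd : ∀ u v : V, F (u + v) = F u + F v)
    (hbij : Function.Bijective F)
    (hsemi : ∀ (c : k) (v : V), F (c • v) = c ^ q • F v)
    (N : ℕ) (hN : 1 ≤ N) :
    {v : V | F v = v} =
      {w : V | ∃ u : V, F^[N] u = u ∧ w = ∑ i ∈ Finset.range N, F^[i] u} := by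
  have hq2 : 2 ≤ q := by
    rw [hq]
    calc 2 ≤ p := hp.two_le
    _ ≤ p ^ e := Nat.le_self_pow (by omega) p
  ext v
  simp only [Set.mem_setOf_eq]
  constructor
  · intro hv
    -- find c with ∑ c^(q^i) = 1
    obtain ⟨c, hc⟩ : ∃ c : k, ∑ i ∈ Finset.range N, c ^ q ^ i = 1 := by
      set P : Polynomial k := (∑ i ∈ Finset.range N, Polynomial.X ^ q ^ i) - 1 with hP
      have hcoeff : P.coeff (q ^ (N - 1)) = 1 := by
        rw [hP, Polynomial.coeff_sub, Polynomial.finset_sum_coeff]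
        have h1 : Polynomial.coeff (1 : Polynomial k) (q ^ (N - 1)) = 0 := by
          rw [Polynomial.coeff_one]
          have : q ^ (N - 1) ≠ 0 := by positivity
          simp only [this, Ne.symm this, ↓reduceIte]
        rw [h1, sub_zero]
        have : ∀ i ∈ Finset.range N,
            (Polynomial.X ^ q ^ i : Polynomial k).coeff (q ^ (N - 1)) =
              if i = N - 1 then 1 else 0 := by
          intro i _
          rw [Polynomial.coeff_X_pow]
          congr 1
          simp only [eq_iff_iff]
          constructor
          · intro h
            exact Nat.pow_right_injective hq2 h.symm
          · intro h; rw [h]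
        rw [Finset.sum_congr rfl this, Finset.sum_ite_eq' (Finset.range N) (N - 1)
          (fun _ => (1 : k))]
        simp [Finset.mem_range]; omega
      have hne : P ≠ 0 := fun h => by simp [h] at hcoeff
      have hdeg : P.degree ≠ 0 := by
        intro h
        have h1 : q ^ (N - 1) ≤ P.natDegree :=
          Polynomial.le_natDegree_of_ne_zero (by rw [hcoeff]; exact one_ne_zero)
        have h2 : 1 ≤ q ^ (N - 1) := Nat.one_le_pow _ _ (by omega)
        rw [Polynomial.degree_eq_natDegree hne] at h
        have : P.natDegree = 0 := by exact_mod_cast h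
        omega
      obtain ⟨c, hc⟩ := IsAlgClosed.exists_root P hdeg
      refine ⟨c, ?_⟩
      have := hc
      simp only [hP, Polynomial.IsRoot, Polynomial.eval_sub, Polynomial.eval_one,
        Polynomial.eval_finset_sum, Polynomial.eval_pow, Polynomial.eval_X] at this
      linear_combination this
    -- iterates of F on c • v
    have hiter : ∀ (i : ℕ) (c : k), F^[i] (c • v) = c ^ q ^ i • v := by
      intro i
      induction i with
      | zero => intro c; simp
      | succ n ih =>
        intro c
        rw [Function.iterate_succ_apply', ih, hsemi, hv, ← pow_mul, ← pow_succ]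
    -- c ^ q ^ N = c
    haveI : ExpChar k p := ExpChar.prime hp
    have h1 : ∑ i ∈ Finset.range N, c ^ q ^ (i + 1) = 1 := by
      calc ∑ i ∈ Finset.range N, c ^ q ^ (i + 1)
          = ∑ i ∈ Finset.range N, (c ^ q ^ i) ^ p ^ e := by
            refine Finset.sum_congr rfl fun i _ => ?_
            rw [← pow_mul, ← hq, ← pow_succ]
        _ = (∑ i ∈ Finset.range N, c ^ q ^ i) ^ p ^ e := by
            rw [sum_pow_char_pow]
        _ = 1 := by rw [hc, one_pow]
    have h2 : ∑ i ∈ Finset.range N, c ^ q ^ (i + 1) + c ^ q ^ 0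
        = ∑ i ∈ Finset.range N, c ^ q ^ i + c ^ q ^ N := by
      rw [← Finset.sum_range_succ' (fun i => c ^ q ^ i) N, Finset.sum_range_succ]
    have h0 : c ^ q ^ 0 = c := by simp
    have hcN : c ^ q ^ N = c := by linear_combination h1 - h2 - hc + h0
    refine ⟨c • v, ?_, ?_⟩
    · rw [hiter N c, hcN]
    · rw [Finset.sum_congr rfl fun i _ => hiter i c, ← Finset.sum_smul, hc, one_smul]
  · rintro ⟨u, hu, rfl⟩
    have hmap : F (∑ i ∈ Finset.range N, F^[i] u)
        = ∑ i ∈ Finset.range N, F (F^[i] u) :=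
      map_sum (AddMonoidHom.mk' F hadd) _ _
    rw [hmap]
    have hstep : ∀ i ∈ Finset.range N, F (F^[i] u) = F^[i + 1] u := fun i _ =>
      (Function.iterate_succ_apply' F i u).symm
    rw [Finset.sum_congr rfl hstep]
    have h2 := Finset.sum_range_succ' (fun i => F^[i] u) N
    have h3 := Finset.sum_range_succ (fun i => F^[i] u) N
    simp only [Function.iterate_zero, id_eq] at h2
    simp only [hu] at h3
    exact add_right_cancel (h2.symm.trans h3)
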